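/- arXiv:1803.04315 — 5 statements merged into one kernel-verified Lean document; each statement's English description precedes it below -/
import Mathlib

section
/- Let X, Y be independent square-integrable random vectors in ℝ^d, c₁ = ‖E[X]−E[Y]‖², c_X and c_Y the traces of their covariances (c_X = E[‖X−E[X]‖²], c_Y = E[‖Y−E[Y]‖²]), with c₁ > 0. For every p ∈ [c_Y, c_Y + c₁], the minimum over u ∈ ℝ^d of E[‖X−u‖²] subject to E[‖Y−u‖²] ≤ p equals c_X + (√c₁ − √(p − c_Y))². -/
open MeasureTheory ProbabilityTheory

lemma decomp_sq {d : ℕ} {Ω : Type*} [MeasureSpace Ω]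
    [IsProbabilityMeasure (ℙ : Measure Ω)]
    (X : Ω → EuclideanSpace ℝ (Fin d)) (hX : MemLp X 2 ℙ)
    (u : EuclideanSpace ℝ (Fin d)) :
    ∫ ω, ‖X ω - u‖ ^ 2 =
      (∫ ω, ‖X ω - (∫ ω', X ω')‖ ^ 2) + ‖u - (∫ ω', X ω')‖ ^ 2 := by
  set μ := ∫ ω', X ω' with hμ
  have hXint : Integrable X ℙ := hX.integrable one_le_two
  have hX2 : MemLp (fun ω => X ω - μ) 2 ℙ := hX.sub (memLp_const μ)
  have i1 : Integrable (fun ω => ‖X ω - μ‖ ^ 2) ℙ := hX2.norm.integrable_sq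
  have hsubint : Integrable (fun ω => X ω - μ) ℙ := hXint.sub (integrable_const μ)
  have i2 : Integrable (fun ω => (inner ℝ (μ - u) (X ω - μ) : ℝ)) ℙ :=
    hsubint.const_inner _
  have hzero : (∫ ω, (X ω - μ)) = 0 := by
    rw [integral_sub hXint (integrable_const μ)]
    simp [hμ]
  have key : ∀ ω, ‖X ω - u‖ ^ 2 =
      ‖X ω - μ‖ ^ 2 + 2 * (inner ℝ (μ - u) (X ω - μ) : ℝ) + ‖μ - u‖ ^ 2 := by
    intro ω
    have h := norm_add_sq_real (X ω - μ) (μ - u)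
    rw [sub_add_sub_cancel] at h
    rw [h, real_inner_comm]
  calc ∫ ω, ‖X ω - u‖ ^ 2
      = ∫ ω, (‖X ω - μ‖ ^ 2 + 2 * (inner ℝ (μ - u) (X ω - μ) : ℝ) + ‖μ - u‖ ^ 2) := by
        simp_rw [key]
    _ = (∫ ω, ‖X ω - μ‖ ^ 2) + (∫ ω, 2 * (inner ℝ (μ - u) (X ω - μ) : ℝ))
          + ‖μ - u‖ ^ 2 := by
        have iA : Integrable (fun ω => ‖X ω - μ‖ ^ 2
            + 2 * (inner ℝ (μ - u) (X ω - μ) : ℝ)) ℙ := i1.add (i2.const_mul 2)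
        rw [integral_add iA (integrable_const _),
          integral_add i1 (i2.const_mul 2)]
        simp
    _ = (∫ ω, ‖X ω - μ‖ ^ 2) + ‖u - μ‖ ^ 2 := by
        rw [integral_const_mul, integral_inner hsubint, hzero]
        simp [norm_sub_rev]

theorem stmt_3 (d : ℕ) (Ω : Type*) [MeasureSpace Ω]
    [IsProbabilityMeasure (ℙ : Measure Ω)]
    (X Y : Ω → EuclideanSpace ℝ (Fin d))
    (hXY : IndepFun X Y ℙ)
    (hX : MemLp X 2 ℙ) (hY : MemLp Y 2 ℙ)
    (c₁ cX cY : ℝ)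
    (hc₁ : c₁ = ‖(∫ ω, X ω) - (∫ ω, Y ω)‖ ^ 2)
    (hcX : cX = ∫ ω, ‖X ω - (∫ ω', X ω')‖ ^ 2)
    (hcY : cY = ∫ ω, ‖Y ω - (∫ ω', Y ω')‖ ^ 2)
    (hc₁pos : 0 < c₁)
    (p : ℝ) (hp : p ∈ Set.Icc cY (cY + c₁)) :
    IsLeast {v : ℝ | ∃ u : EuclideanSpace ℝ (Fin d),
        (∫ ω, ‖Y ω - u‖ ^ 2) ≤ p ∧ v = ∫ ω, ‖X ω - u‖ ^ 2}
      (cX + (Real.sqrt c₁ - Real.sqrt (p - cY)) ^ 2) := by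
  obtain ⟨hp1, hp2⟩ := hp
  set μX := ∫ ω, X ω with hμX
  set μY := ∫ ω, Y ω with hμY
  set s := ‖μX - μY‖ with hsdef
  set r := Real.sqrt (p - cY) with hrdef
  have hsc : Real.sqrt c₁ = s := by rw [hc₁, Real.sqrt_sq (norm_nonneg _)]
  have hr0 : 0 ≤ r := Real.sqrt_nonneg _
  have hr2 : r ^ 2 = p - cY := Real.sq_sqrt (by linarith)
  have hrs : r ≤ s := by
    rw [← hsc, hrdef]; exact Real.sqrt_le_sqrt (by linarith [hc₁] )
  have hspos : 0 < s := by
    have hs0 : 0 ≤ s := norm_nonneg _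
    have h2 : 0 < s ^ 2 := by rw [← hc₁]; exact hc₁pos
    nlinarith
  constructor
  · -- membership: take u on segment
    refine ⟨μY + (r / s) • (μX - μY), ?_, ?_⟩
    · rw [decomp_sq Y hY, ← hcY, ← hμY]
      have : ‖μY + (r / s) • (μX - μY) - μY‖ = r := by
        rw [add_sub_cancel_left, norm_smul]
        rw [Real.norm_eq_abs, abs_of_nonneg (by positivity)]
        field_simp
        rw [← hsdef]
      rw [this, hr2]; linarith
    · rw [decomp_sq X hX, ← hcX, ← hμX, hsc]
      have h1 : μY + (r / s) • (μX - μY) - μX = (r / s - 1) • (μX - μY) := by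
        rw [sub_smul, one_smul]; abel
      have h2 : ‖μY + (r / s) • (μX - μY) - μX‖ = s - r := by
        rw [h1, norm_smul, Real.norm_eq_abs]
        have : |r / s - 1| = 1 - r / s := by
          rw [abs_sub_comm, abs_of_nonneg]
          rw [sub_nonneg]
          exact (div_le_one hspos).2 hrs
        rw [this]
        field_simp
        rw [← hsdef]; ring
      rw [h2]
  · -- lower bound
    rintro v ⟨u, hcon, rfl⟩
    rw [decomp_sq Y hY, ← hcY, ← hμY] at hcon
    rw [decomp_sq X hX, ← hcX, ← hμX, hsc]
    have huY : ‖u - μY‖ ≤ r := by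
      rw [hrdef, ← Real.sqrt_sq (norm_nonneg (u - μY))]
      exact Real.sqrt_le_sqrt (by linarith)
    have htri : s ≤ ‖u - μX‖ + ‖u - μY‖ := by
      have := dist_triangle μX u μY
      simpa [hsdef, dist_eq_norm, norm_sub_rev] using this
    have h1 : s - r ≤ ‖u - μX‖ := by linarith
    have h2 : (s - r) ^ 2 ≤ ‖u - μX‖ ^ 2 := by nlinarith
    linarith
end

section
/- For any c₂ > 0 and c_Y ≥ 0, the distributed tradeoff p ↦ (√c₂ − √(p − c_Y))² on [c_Y, c_Y + c₂] dominates (is greater than or equal to) the centralized tradeoff p ↦ (√(c₂ + c_Y) − √p)² on the common domain [c_Y, c_Y + c₂], with equality at the endpoint p = c_Y + c₂ and strict inequality for p ∈ (c_Y, c_Y + c₂) when c_Y > 0. -/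
theorem stmt_13 (c₂ cY : ℝ) (hc₂ : 0 < c₂) (hcY : 0 ≤ cY) :
    (∀ p ∈ Set.Icc cY (cY + c₂),
      (Real.sqrt (c₂ + cY) - Real.sqrt p) ^ 2
        ≤ (Real.sqrt c₂ - Real.sqrt (p - cY)) ^ 2) ∧
    ((Real.sqrt (c₂ + cY) - Real.sqrt (cY + c₂)) ^ 2
      = (Real.sqrt c₂ - Real.sqrt ((cY + c₂) - cY)) ^ 2) ∧
    (0 < cY → ∀ p ∈ Set.Ioo cY (cY + c₂),
      (Real.sqrt (c₂ + cY) - Real.sqrt p) ^ 2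
        < (Real.sqrt c₂ - Real.sqrt (p - cY)) ^ 2) := by
  refine ⟨?_, ?_, ?_⟩
  · intro p hp
    obtain ⟨h1, h2⟩ := hp
    set a := Real.sqrt (c₂ + cY) with ha
    set b := Real.sqrt p with hb
    set c := Real.sqrt c₂ with hc
    set d := Real.sqrt (p - cY) with hd
    have hp0 : 0 ≤ p := le_trans hcY h1
    have ha0 : 0 ≤ a := Real.sqrt_nonneg _
    have hb0 : 0 ≤ b := Real.sqrt_nonneg _
    have hc0 : 0 ≤ c := Real.sqrt_nonneg _
    have hd0 : 0 ≤ d := Real.sqrt_nonneg _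
    have ha2 : a ^ 2 = c₂ + cY := Real.sq_sqrt (by linarith)
    have hb2 : b ^ 2 = p := Real.sq_sqrt hp0
    have hc2 : c ^ 2 = c₂ := Real.sq_sqrt hc₂.le
    have hd2 : d ^ 2 = p - cY := Real.sq_sqrt (by linarith)
    have hsq : (c * d + cY) ^ 2 ≤ (a * b) ^ 2 := by
      nlinarith [sq_nonneg (c - d)]
    have key : c * d + cY ≤ a * b := by
      have := Real.sqrt_le_sqrt hsq
      rwa [Real.sqrt_sq (by positivity), Real.sqrt_sq (by positivity)] at this
    nlinarith [key]
  · simp [add_sub_cancel_right, add_comm c₂ cY]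
  · intro hcY' p hp
    obtain ⟨h1, h2⟩ := hp
    set a := Real.sqrt (c₂ + cY) with ha
    set b := Real.sqrt p with hb
    set c := Real.sqrt c₂ with hc
    set d := Real.sqrt (p - cY) with hd
    have hp0 : 0 ≤ p := le_trans hcY h1.le
    have ha0 : 0 ≤ a := Real.sqrt_nonneg _
    have hb0 : 0 ≤ b := Real.sqrt_nonneg _
    have hc0 : 0 ≤ c := Real.sqrt_nonneg _
    have hd0 : 0 ≤ d := Real.sqrt_nonneg _
    have ha2 : a ^ 2 = c₂ + cY := Real.sq_sqrt (by linarith)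
    have hb2 : b ^ 2 = p := Real.sq_sqrt hp0
    have hc2 : c ^ 2 = c₂ := Real.sq_sqrt hc₂.le
    have hd2 : d ^ 2 = p - cY := Real.sq_sqrt (by linarith)
    have hdc : d < c := by
      have : d ^ 2 < c ^ 2 := by rw [hc2, hd2]; linarith
      nlinarith
    have hcd2 : 0 < (c - d) ^ 2 := pow_pos (sub_pos.2 hdc) 2
    have hsq : (c * d + cY) ^ 2 < (a * b) ^ 2 := by
      nlinarith [mul_pos hcY' hcd2]
    have key : c * d + cY < a * b := by
      have := Real.sqrt_lt_sqrt (by positivity) hsq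
      rwa [Real.sqrt_sq (by positivity), Real.sqrt_sq (by positivity)] at this
    nlinarith [key]
end

section
/- For X uniform on [0,1], the minimum over n real points u₁,...,uₙ of E[min_i (X−u_i)²] equals 1/(12n²), achieved by the equispaced points u_i = (2i−1)/(2n). -/
open MeasureTheory ProbabilityTheory
open Set

section aux
variable {n : ℕ} [NeZero n]

lemma my_inf_eq (u : Fin n → ℝ) (x : ℝ) :
    (⨅ i, (x - u i) ^ 2) = Finset.univ.inf' Finset.univ_nonempty (fun i => (x - u i) ^ 2) :=
  (Finset.inf'_univ_eq_ciInf _).symm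

lemma my_cont (u : Fin n → ℝ) : Continuous (fun x : ℝ => ⨅ i, (x - u i) ^ 2) := by
  have : (fun x : ℝ => ⨅ i, (x - u i) ^ 2)
      = fun x => Finset.univ.inf' Finset.univ_nonempty (fun i => (x - u i) ^ 2) :=
    funext fun x => my_inf_eq u x
  rw [this]
  exact Continuous.finset_inf'_apply _ fun i _ => by fun_prop

lemma my_nn (u : Fin n → ℝ) (x : ℝ) : 0 ≤ ⨅ i, (x - u i) ^ 2 :=
  le_ciInf fun i => sq_nonneg _

lemma my_le (u : Fin n → ℝ) (x : ℝ) (i : Fin n) : (⨅ j, (x - u j) ^ 2) ≤ (x - u i) ^ 2 :=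
  ciInf_le ⟨0, by rintro y ⟨j, rfl⟩; exact sq_nonneg _⟩ i

end aux

section lb
variable {n : ℕ} [NeZero n]

lemma tail_bound (u : Fin n → ℝ) {t : ℝ} (ht : 0 < t) :
    ENNReal.ofReal (1 - 2 * n * Real.sqrt t)
      ≤ (volume.restrict (Icc (0:ℝ) 1)) {a | t < ⨅ i, (a - u i) ^ 2} := by
  set μ := volume.restrict (Icc (0:ℝ) 1) with hμ
  have hst : (0:ℝ) ≤ Real.sqrt t := Real.sqrt_nonneg t
  have hsub : {a : ℝ | (⨅ i, (a - u i) ^ 2) ≤ t}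
      ⊆ ⋃ i, Icc (u i - Real.sqrt t) (u i + Real.sqrt t) := by
    intro x hx
    obtain ⟨i, -, hi⟩ := Finset.exists_mem_eq_inf' (Finset.univ_nonempty (α := Fin n))
      (fun i => (x - u i) ^ 2)
    have hx' : (x - u i) ^ 2 ≤ t := by
      rw [← hi, ← my_inf_eq]; exact hx
    have habs : |x - u i| ≤ Real.sqrt t := by
      have := Real.sqrt_le_sqrt hx'
      rwa [Real.sqrt_sq_eq_abs] at this
    rw [abs_le] at habs
    exact Set.mem_iUnion.2 ⟨i, by constructor <;> linarith [habs.1, habs.2]⟩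
  have hle : μ {a : ℝ | (⨅ i, (a - u i) ^ 2) ≤ t} ≤ ENNReal.ofReal (2 * n * Real.sqrt t) := by
    calc μ {a : ℝ | (⨅ i, (a - u i) ^ 2) ≤ t}
        ≤ μ (⋃ i, Icc (u i - Real.sqrt t) (u i + Real.sqrt t)) := measure_mono hsub
      _ ≤ ∑ i : Fin n, μ (Icc (u i - Real.sqrt t) (u i + Real.sqrt t)) :=
          measure_iUnion_fintype_le _ _
      _ ≤ ∑ i : Fin n, volume (Icc (u i - Real.sqrt t) (u i + Real.sqrt t)) := by
          refine Finset.sum_le_sum fun i _ => ?_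
          rw [hμ, Measure.restrict_apply measurableSet_Icc]
          exact measure_mono inter_subset_left
      _ = ∑ i : Fin n, ENNReal.ofReal (2 * Real.sqrt t) := by
          refine Finset.sum_congr rfl fun i _ => ?_
          rw [Real.volume_Icc]; ring_nf
      _ = ENNReal.ofReal (2 * n * Real.sqrt t) := by
          rw [Finset.sum_const, Finset.card_univ, Fintype.card_fin, nsmul_eq_mul,
            ← ENNReal.ofReal_natCast, ← ENNReal.ofReal_mul (by positivity)]
          ring_nf
  have hcompl : {a : ℝ | t < ⨅ i, (a - u i) ^ 2} = {a : ℝ | (⨅ i, (a - u i) ^ 2) ≤ t}ᶜ := by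
    ext a; simp [not_le]
  have hmeas : MeasurableSet {a : ℝ | (⨅ i, (a - u i) ^ 2) ≤ t} :=
    measurableSet_le (my_cont u).measurable measurable_const
  have hμuniv : μ univ = 1 := by
    rw [hμ, Measure.restrict_apply_univ, Real.volume_Icc]
    norm_num
  rw [hcompl, measure_compl hmeas (measure_ne_top μ _), hμuniv]
  calc ENNReal.ofReal (1 - 2 * n * Real.sqrt t)
      = ENNReal.ofReal 1 - ENNReal.ofReal (2 * n * Real.sqrt t) :=
        ENNReal.ofReal_sub _ (by positivity)
    _ ≤ 1 - μ {a : ℝ | (⨅ i, (a - u i) ^ 2) ≤ t} := by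
        rw [ENNReal.ofReal_one]; exact tsub_le_tsub_left hle 1

end lb

lemma sqrt_cont : Continuous (fun t : ℝ => 1 - 2 * (n:ℝ) * Real.sqrt t) := by fun_prop

lemma calc_tail_int {n : ℕ} (hn : 1 ≤ n) :
    ∫ t in (0:ℝ)..(1 / (4 * (n:ℝ) ^ 2)), (1 - 2 * n * Real.sqrt t) = 1 / (12 * (n:ℝ) ^ 2) := by
  have hnpos : (0:ℝ) < n := by exact_mod_cast hn
  set c : ℝ := 1 / (4 * (n:ℝ) ^ 2) with hc
  have hcpos : 0 < c := by positivity
  have hint1 : IntervalIntegrable (fun _ : ℝ => (1:ℝ)) volume 0 c := intervalIntegrable_const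
  have hint2 : IntervalIntegrable (fun t : ℝ => 2 * (n:ℝ) * Real.sqrt t) volume 0 c :=
    (continuous_const.mul Real.continuous_sqrt).intervalIntegrable 0 c
  have hsq : ∫ t in (0:ℝ)..c, Real.sqrt t = 2 / 3 * c * Real.sqrt c := by
    have h1 : ∀ t ∈ Set.uIcc (0:ℝ) c, Real.sqrt t = t ^ ((1:ℝ)/2) := by
      intro t ht
      rw [Real.sqrt_eq_rpow]
    rw [intervalIntegral.integral_congr h1, integral_rpow (Or.inl (by norm_num))]
    rw [Real.zero_rpow (by norm_num)]
    have : c ^ ((1:ℝ)/2 + 1) = c * Real.sqrt c := by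
      rw [Real.rpow_add hcpos, Real.rpow_one, Real.sqrt_eq_rpow]
      ring
    rw [show (1:ℝ)/2 + 1 = 1/2 + 1 from rfl, this]
    ring
  have hsc : Real.sqrt c = 1 / (2 * n) := by
    have : c = (1 / (2 * (n:ℝ))) ^ 2 := by rw [hc]; ring
    rw [this, Real.sqrt_sq (by positivity)]
  rw [intervalIntegral.integral_sub hint1 hint2, intervalIntegral.integral_const,
    intervalIntegral.integral_const_mul, hsq, hsc, hc]
  field_simp
  ring_nf; rw [inv_pow, mul_inv_cancel₀ (pow_ne_zero 2 hnpos.ne')]; norm_num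

lemma lower_bound {n : ℕ} [NeZero n] (hn : 1 ≤ n) (u : Fin n → ℝ) :
    1 / (12 * (n:ℝ) ^ 2) ≤ ∫ x in Icc (0:ℝ) 1, ⨅ i, (x - u i) ^ 2 := by
  have hnpos : (0:ℝ) < n := by exact_mod_cast hn
  set μ := volume.restrict (Icc (0:ℝ) 1) with hμ
  set c : ℝ := 1 / (4 * (n:ℝ) ^ 2) with hc
  have hcpos : 0 < c := by positivity
  have hgint : Integrable (fun x => ⨅ i, (x - u i) ^ 2) μ := by
    rw [hμ]
    exact (my_cont u).integrableOn_Icc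
  have hgnn : 0 ≤ᵐ[μ] fun x => ⨅ i, (x - u i) ^ 2 :=
    Filter.Eventually.of_forall (my_nn u)
  have key : ENNReal.ofReal (∫ x, (⨅ i, (x - u i) ^ 2) ∂μ)
      = ∫⁻ x, ENNReal.ofReal (⨅ i, (x - u i) ^ 2) ∂μ :=
    ofReal_integral_eq_lintegral_ofReal hgint hgnn
  have layer : (∫⁻ x, ENNReal.ofReal (⨅ i, (x - u i) ^ 2) ∂μ)
      = ∫⁻ t in Set.Ioi (0:ℝ), μ {a | t < ⨅ i, (a - u i) ^ 2} :=
    lintegral_eq_lintegral_meas_lt μ hgnn (my_cont u).measurable.aemeasurable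
  -- nonnegativity of the tail integrand on Ioc 0 c
  have hnn : ∀ t ∈ Set.Ioc (0:ℝ) c, 0 ≤ 1 - 2 * n * Real.sqrt t := by
    intro t ht
    have hsc : Real.sqrt c = 1 / (2 * n) := by
      have : c = (1 / (2 * (n:ℝ))) ^ 2 := by rw [hc]; ring
      rw [this, Real.sqrt_sq (by positivity)]
    have := Real.sqrt_le_sqrt ht.2
    rw [hsc] at this
    have h2 : 2 * (n:ℝ) * Real.sqrt t ≤ 2 * n * (1 / (2 * n)) := by
      apply mul_le_mul_of_nonneg_left this (by positivity)
    have h3 : 2 * (n:ℝ) * (1 / (2 * n)) = 1 := by field_simp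
    linarith
  have hbig : ENNReal.ofReal (1 / (12 * (n:ℝ) ^ 2))
      ≤ ∫⁻ t in Set.Ioi (0:ℝ), μ {a | t < ⨅ i, (a - u i) ^ 2} := by
    calc ENNReal.ofReal (1 / (12 * (n:ℝ) ^ 2))
        = ENNReal.ofReal (∫ t in Set.Ioc (0:ℝ) c, (1 - 2 * n * Real.sqrt t)) := by
          rw [← intervalIntegral.integral_of_le hcpos.le, calc_tail_int hn]
      _ = ∫⁻ t in Set.Ioc (0:ℝ) c, ENNReal.ofReal (1 - 2 * n * Real.sqrt t) := by
          apply ofReal_integral_eq_lintegral_ofReal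
          · exact (sqrt_cont (n := n)).integrableOn_Icc.mono_set Set.Ioc_subset_Icc_self
          · exact (ae_restrict_iff' measurableSet_Ioc).2 (Filter.Eventually.of_forall hnn)
      _ ≤ ∫⁻ t in Set.Ioc (0:ℝ) c, μ {a | t < ⨅ i, (a - u i) ^ 2} := by
          refine setLIntegral_mono' measurableSet_Ioc fun t ht => tail_bound u ht.1
      _ ≤ ∫⁻ t in Set.Ioi (0:ℝ), μ {a | t < ⨅ i, (a - u i) ^ 2} :=
          lintegral_mono_set Set.Ioc_subset_Ioi_self
  rw [← layer, ← key] at hbig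
  have hnn' : 0 ≤ ∫ x, (⨅ i, (x - u i) ^ 2) ∂μ := integral_nonneg (my_nn u)
  exact (ENNReal.ofReal_le_ofReal_iff hnn').1 hbig

lemma upper_bound {n : ℕ} [NeZero n] (hn : 1 ≤ n) :
    (∫ x in Icc (0:ℝ) 1, ⨅ i : Fin n, (x - (2 * (i:ℝ) + 1) / (2 * n)) ^ 2)
      ≤ 1 / (12 * (n:ℝ) ^ 2) := by
  have hnpos : (0:ℝ) < n := by exact_mod_cast hn
  set u : Fin n → ℝ := fun i => (2 * (i:ℝ) + 1) / (2 * n) with hu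
  set a : ℕ → ℝ := fun k => k / n with ha
  have hmono : ∀ k : ℕ, a k ≤ a (k + 1) := by
    intro k
    have : ((k:ℝ)) / n ≤ ((k:ℝ) + 1) / n := by
      gcongr
      linarith
    simpa [ha] using this
  have hsum : (∑ k ∈ Finset.range n, ∫ x in a k..a (k + 1), ⨅ i, (x - u i) ^ 2)
      = ∫ x in (a 0)..(a n), ⨅ i, (x - u i) ^ 2 :=
    intervalIntegral.sum_integral_adjacent_intervals
      (fun k _ => (my_cont u).intervalIntegrable _ _)
  have ha0 : a 0 = 0 := by simp [ha]
  have han : a n = 1 := by rw [ha]; field_simp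
  have hpiece : ∀ k, k < n →
      (∫ x in a k..a (k + 1), ⨅ i, (x - u i) ^ 2) ≤ 1 / (12 * (n:ℝ) ^ 3) := by
    intro k hk
    have hcoe : (((⟨k, hk⟩ : Fin n) : ℕ) : ℝ) = (k : ℝ) := rfl
    have step1 : (∫ x in a k..a (k + 1), ⨅ i, (x - u i) ^ 2)
        ≤ ∫ x in a k..a (k + 1), (x - u ⟨k, hk⟩) ^ 2 := by
      apply intervalIntegral.integral_mono_on (hmono k)
        ((my_cont u).intervalIntegrable _ _)
        ((by fun_prop : Continuous fun x : ℝ => (x - u ⟨k, hk⟩) ^ 2).intervalIntegrable _ _)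
      intro x _
      exact my_le u x ⟨k, hk⟩
    have step2 : (∫ x in a k..a (k + 1), (x - u ⟨k, hk⟩) ^ 2) = 1 / (12 * (n:ℝ) ^ 3) := by
      rw [intervalIntegral.integral_comp_sub_right (fun x => x ^ 2) (u ⟨k, hk⟩),
        integral_pow]
      have h1 : a (k + 1) - u ⟨k, hk⟩ = 1 / (2 * n) := by
        rw [ha, hu]; push_cast [hcoe]; field_simp; ring
      have h2 : a k - u ⟨k, hk⟩ = -(1 / (2 * n)) := by
        rw [ha, hu]; push_cast [hcoe]; field_simp; ring
      rw [h1, h2]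
      field_simp
      ring_nf; rw [inv_pow, mul_inv_cancel₀ (pow_ne_zero 3 hnpos.ne')]; norm_num
    linarith
  have : (∑ k ∈ Finset.range n, ∫ x in a k..a (k + 1), ⨅ i, (x - u i) ^ 2)
      ≤ ∑ k ∈ Finset.range n, 1 / (12 * (n:ℝ) ^ 3) :=
    Finset.sum_le_sum fun k hk => hpiece k (Finset.mem_range.1 hk)
  rw [hsum, ha0, han] at this
  rw [Finset.sum_const, Finset.card_range, nsmul_eq_mul] at this
  have hval : (n:ℝ) * (1 / (12 * (n:ℝ) ^ 3)) = 1 / (12 * (n:ℝ) ^ 2) := by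
    field_simp
  rw [hval] at this
  calc (∫ x in Icc (0:ℝ) 1, ⨅ i : Fin n, (x - (2 * (i:ℝ) + 1) / (2 * n)) ^ 2)
      = ∫ x in Set.Ioc (0:ℝ) 1, ⨅ i, (x - u i) ^ 2 := integral_Icc_eq_integral_Ioc
    _ = ∫ x in (0:ℝ)..1, ⨅ i, (x - u i) ^ 2 :=
        (intervalIntegral.integral_of_le zero_le_one).symm
    _ ≤ 1 / (12 * (n:ℝ) ^ 2) := this

theorem stmt_15 (Ω : Type*) [MeasureSpace Ω]
    [IsProbabilityMeasure (ℙ : Measure Ω)]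
    (X : Ω → ℝ) (hXmeas : Measurable X)
    (hXunif : Measure.map X ℙ = volume.restrict (Set.Icc (0 : ℝ) 1))
    (n : ℕ) (hn : 1 ≤ n) :
    IsLeast {v : ℝ | ∃ u : Fin n → ℝ, v = ∫ ω, ⨅ i, (X ω - u i) ^ 2}
        (1 / (12 * (n : ℝ) ^ 2)) ∧
    (∫ ω, ⨅ i : Fin n, (X ω - (2 * (i : ℝ) + 1) / (2 * n)) ^ 2)
      = 1 / (12 * (n : ℝ) ^ 2) := by
  haveI : NeZero n := ⟨by omega⟩
  have transfer : ∀ u : Fin n → ℝ,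
      (∫ ω, ⨅ i, (X ω - u i) ^ 2) = ∫ x in Set.Icc (0:ℝ) 1, ⨅ i, (x - u i) ^ 2 := by
    intro u
    rw [← hXunif]
    exact (integral_map hXmeas.aemeasurable (my_cont u).aestronglyMeasurable).symm
  have heq : (∫ ω, ⨅ i : Fin n, (X ω - (2 * (i : ℝ) + 1) / (2 * n)) ^ 2)
      = 1 / (12 * (n:ℝ) ^ 2) := by
    rw [transfer (fun i => (2 * (i:ℝ) + 1) / (2 * n))]
    exact le_antisymm (upper_bound hn) (lower_bound hn _)
  refine ⟨⟨⟨fun i => (2 * (i:ℝ) + 1) / (2 * n), heq.symm⟩, ?_⟩, heq⟩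
  rintro v ⟨u, rfl⟩
  rw [transfer u]
  exact lower_bound hn u
end

section
/- Let X, Y be independent square-integrable random vectors in ℝ^d and λ ≥ 0. For any finite set of points u₁,...,uₙ ∈ ℝ^d, E[min_i (‖X−u_i‖² + λ‖Y−u_i‖²)] = λE[‖X−Y‖²]/(1+λ) + (1+λ)·E[min_i ‖u_i − Z‖²], where Z = (X+λY)/(1+λ). -/
open MeasureTheory ProbabilityTheory RealInnerProductSpace

lemma key_alg {E : Type*} [NormedAddCommGroup E] [InnerProductSpace ℝ E]
    (l : ℝ) (hl : 0 ≤ l) (x y v : E) :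
    ‖x - v‖ ^ 2 + l * ‖y - v‖ ^ 2
      = l * ‖x - y‖ ^ 2 / (1 + l) + (1 + l) * ‖v - (1 / (1 + l)) • (x + l • y)‖ ^ 2 := by
  have h : (0:ℝ) < 1 + l := by linarith
  have e : ∀ w : E, ‖w‖ ^ 2 = ⟪w, w⟫ := fun w => (real_inner_self_eq_norm_sq w).symm
  rw [e, e, e, e]
  simp only [inner_sub_left, inner_sub_right, inner_add_left, inner_add_right,
    real_inner_smul_left, real_inner_smul_right, real_inner_comm y x,
    real_inner_comm v x, real_inner_comm v y]
  field_simp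
  ring

lemma inf_shift {n : ℕ} [Nonempty (Fin n)] (c K : ℝ) (hK : 0 ≤ K) (f : Fin n → ℝ) :
    ⨅ i, (c + K * f i) = c + K * ⨅ i, f i := by
  have hb : BddBelow (Set.range f) := (Set.finite_range f).bddBelow
  have hm : Monotone fun t : ℝ => c + K * t := fun a b hab => by
    dsimp; nlinarith
  have hc : ContinuousAt (fun t : ℝ => c + K * t) (⨅ i, f i) := by fun_prop
  exact (hm.map_ciInf_of_continuousAt hc hb).symm

theorem stmt_18 (d : ℕ) (Ω : Type*) [MeasureSpace Ω]
    [IsProbabilityMeasure (ℙ : Measure Ω)]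
    (X Y : Ω → EuclideanSpace ℝ (Fin d))
    (hXY : IndepFun X Y ℙ)
    (hX : MemLp X 2 ℙ) (hY : MemLp Y 2 ℙ)
    (l : ℝ) (hl : 0 ≤ l)
    (n : ℕ) (hn : 1 ≤ n) (u : Fin n → EuclideanSpace ℝ (Fin d))
    (Z : Ω → EuclideanSpace ℝ (Fin d))
    (hZ : ∀ ω, Z ω = (1 / (1 + l)) • (X ω + l • Y ω)) :
    (∫ ω, ⨅ i, (‖X ω - u i‖ ^ 2 + l * ‖Y ω - u i‖ ^ 2))
      = l * (∫ ω, ‖X ω - Y ω‖ ^ 2) / (1 + l)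
        + (1 + l) * (∫ ω, ⨅ i, ‖u i - Z ω‖ ^ 2) := by
  have hpos : (0:ℝ) < 1 + l := by linarith
  haveI : Nonempty (Fin n) := ⟨⟨0, hn⟩⟩
  -- Z is in L²
  have hZmem : MemLp Z 2 ℙ := by
    have : MemLp (fun ω => (1 / (1 + l)) • (X ω + l • Y ω)) 2 ℙ :=
      (hX.add (hY.const_smul l)).const_smul (1 / (1 + l))
    exact this.ae_eq (Filter.Eventually.of_forall fun ω => (hZ ω).symm)
  -- integrability of squared norms
  have sqInt : ∀ (W : Ω → EuclideanSpace ℝ (Fin d)), MemLp W 2 ℙ →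
      Integrable (fun ω => ‖W ω‖ ^ 2) ℙ := by
    intro W hW
    have := hW.integrable_norm_rpow (by norm_num) (by norm_num)
    simpa [ENNReal.toReal_ofNat, Real.rpow_natCast] using this
  have hIXY : Integrable (fun ω => ‖X ω - Y ω‖ ^ 2) ℙ := sqInt _ (hX.sub hY)
  have hIi : ∀ i, Integrable (fun ω => ‖u i - Z ω‖ ^ 2) ℙ :=
    fun i => sqInt _ ((memLp_const (u i)).sub hZmem)
  -- integrability of the infimum
  have hg_meas : AEStronglyMeasurable (fun ω => ⨅ i, ‖u i - Z ω‖ ^ 2) ℙ := by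
    have : AEMeasurable (fun ω => ⨅ i, ‖u i - Z ω‖ ^ 2) ℙ :=
      AEMeasurable.iInf fun i => (hIi i).aemeasurable
    exact this.aestronglyMeasurable
  have hg_nonneg : ∀ ω, 0 ≤ ⨅ i, ‖u i - Z ω‖ ^ 2 :=
    fun ω => le_ciInf fun i => sq_nonneg _
  have hIg : Integrable (fun ω => ⨅ i, ‖u i - Z ω‖ ^ 2) ℙ := by
    refine (hIi ⟨0, hn⟩).mono' hg_meas ?_
    refine Filter.Eventually.of_forall fun ω => ?_
    rw [Real.norm_eq_abs, abs_of_nonneg (hg_nonneg ω)]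
    exact ciInf_le ((Set.finite_range fun i => ‖u i - Z ω‖ ^ 2).bddBelow) ⟨0, hn⟩
  -- pointwise identity
  have hpt : ∀ ω, (⨅ i, (‖X ω - u i‖ ^ 2 + l * ‖Y ω - u i‖ ^ 2))
      = l * ‖X ω - Y ω‖ ^ 2 / (1 + l) + (1 + l) * ⨅ i, ‖u i - Z ω‖ ^ 2 := by
    intro ω
    have : ∀ i, ‖X ω - u i‖ ^ 2 + l * ‖Y ω - u i‖ ^ 2
        = l * ‖X ω - Y ω‖ ^ 2 / (1 + l) + (1 + l) * ‖u i - Z ω‖ ^ 2 := by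
      intro i
      rw [hZ]
      exact key_alg l hl (X ω) (Y ω) (u i)
    simp_rw [this]
    exact inf_shift _ _ (le_of_lt hpos) _
  calc (∫ ω, ⨅ i, (‖X ω - u i‖ ^ 2 + l * ‖Y ω - u i‖ ^ 2))
      = ∫ ω, (l * ‖X ω - Y ω‖ ^ 2 / (1 + l) + (1 + l) * ⨅ i, ‖u i - Z ω‖ ^ 2) := by
        exact integral_congr_ae (Filter.Eventually.of_forall hpt)
    _ = (∫ ω, l * ‖X ω - Y ω‖ ^ 2 / (1 + l)) + ∫ ω, (1 + l) * ⨅ i, ‖u i - Z ω‖ ^ 2 := by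
        exact integral_add ((hIXY.const_mul l).div_const (1 + l)) (hIg.const_mul (1 + l))
    _ = l * (∫ ω, ‖X ω - Y ω‖ ^ 2) / (1 + l)
        + (1 + l) * (∫ ω, ⨅ i, ‖u i - Z ω‖ ^ 2) := by
        rw [integral_div, integral_const_mul, integral_const_mul]
end

section
/- Let X, Y be independent square-integrable random variables and λ ≥ 0. For points u₁,...,uₙ ∈ ℝ, E[min_i ((X−u_i)² + λE[(Y−u_i)²])] = (λE[(X−Y)²] + λ²Var(Y))/(1+λ) + (1+λ)E[min_i (u_i − W)²], where W = (X+λE[Y])/(1+λ) and the inner expectation over Y is taken before the minimum. -/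
open MeasureTheory ProbabilityTheory

theorem stmt_19 (Ω : Type*) [MeasureSpace Ω]
    [IsProbabilityMeasure (ℙ : Measure Ω)]
    (X Y : Ω → ℝ)
    (hXY : IndepFun X Y ℙ)
    (hX : MemLp X 2 ℙ) (hY : MemLp Y 2 ℙ)
    (l : ℝ) (hl : 0 ≤ l)
    (n : ℕ) (hn : 1 ≤ n) (u : Fin n → ℝ)
    (W : Ω → ℝ) (hW : ∀ ω, W ω = (X ω + l * (∫ ω', Y ω')) / (1 + l)) :
    (∫ ω, ⨅ i, ((X ω - u i) ^ 2 + l * (∫ ω', (Y ω' - u i) ^ 2)))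
      = (l * (∫ ω, (X ω - Y ω) ^ 2)
            + l ^ 2 * ((∫ ω, (Y ω) ^ 2) - (∫ ω, Y ω) ^ 2)) / (1 + l)
        + (1 + l) * (∫ ω, ⨅ i, (u i - W ω) ^ 2) := by
  have hne : Nonempty (Fin n) := Fin.pos_iff_nonempty.mp hn
  have h1l : (0:ℝ) < 1 + l := by linarith
  have h1l' : (1 + l : ℝ) ≠ 0 := ne_of_gt h1l
  set m : ℝ := ∫ ω', Y ω' with hm
  set EX : ℝ := ∫ ω', X ω' with hEX
  set EX2 : ℝ := ∫ ω', X ω' ^ 2 with hEX2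
  set EY2 : ℝ := ∫ ω', Y ω' ^ 2 with hEY2
  have hXi : Integrable X ℙ := hX.integrable one_le_two
  have hYi : Integrable Y ℙ := hY.integrable one_le_two
  have hX2 : Integrable (fun ω => X ω ^ 2) ℙ := hX.integrable_sq
  have hY2 : Integrable (fun ω => Y ω ^ 2) ℙ := hY.integrable_sq
  -- inner integral formula
  have hinner : ∀ cc : ℝ, (∫ ω', (Y ω' - cc) ^ 2) = EY2 - 2 * cc * m + cc ^ 2 := by
    intro cc
    have h1 : (fun ω' => (Y ω' - cc) ^ 2)
        = fun ω' => (Y ω' ^ 2 - 2 * cc * Y ω') + cc ^ 2 := by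
      funext ω'; ring
    have hA : Integrable (fun ω' => Y ω' ^ 2 - 2 * cc * Y ω') ℙ :=
      hY2.sub (hYi.const_mul _)
    rw [h1, integral_add hA (integrable_const _),
      integral_sub hY2 (hYi.const_mul _), integral_const_mul, integral_const]
    simp [hm, hEY2]
  -- the constant part
  set c : Ω → ℝ := fun ω => X ω ^ 2 + l * EY2 - (X ω + l * m) ^ 2 / (1 + l) with hc
  -- pointwise identity
  have hpt : ∀ ω, (⨅ i, ((X ω - u i) ^ 2 + l * (∫ ω', (Y ω' - u i) ^ 2)))
      = (1 + l) * (⨅ i, (u i - W ω) ^ 2) + c ω := by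
    intro ω
    have hmono : Monotone (fun t : ℝ => (1 + l) * t + c ω) := by
      intro a b hab
      have := mul_le_mul_of_nonneg_left hab (le_of_lt h1l)
      dsimp only
      linarith
    have hginf : ∀ x y : ℝ, (1 + l) * (x ⊓ y) + c ω
        = ((1 + l) * x + c ω) ⊓ ((1 + l) * y + c ω) := by
      intro x y
      simpa using hmono.map_min (a := x) (b := y)
    have hterm : ∀ i, (X ω - u i) ^ 2 + l * (∫ ω', (Y ω' - u i) ^ 2)
        = (1 + l) * ((u i - W ω) ^ 2) + c ω := by
      intro i
      rw [hinner, hW, hc]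
      field_simp
      ring
    rw [← Finset.inf'_univ_eq_ciInf, ← Finset.inf'_univ_eq_ciInf]
    calc Finset.univ.inf' Finset.univ_nonempty
          (fun i => (X ω - u i) ^ 2 + l * (∫ ω', (Y ω' - u i) ^ 2))
        = Finset.univ.inf' Finset.univ_nonempty
          ((fun t : ℝ => (1 + l) * t + c ω) ∘ (fun i => (u i - W ω) ^ 2)) := by
          refine Finset.inf'_congr _ rfl fun i _ => ?_
          simpa using hterm i
      _ = (1 + l) * (Finset.univ.inf' Finset.univ_nonempty
            (fun i => (u i - W ω) ^ 2)) + c ω :=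
          (Finset.apply_inf'_eq_inf'_comp _ _ hginf).symm
  -- integrability of the constant part
  have hcsq : Integrable (fun ω => X ω ^ 2 + 2 * (l * m) * X ω + (l * m) ^ 2) ℙ :=
    (hX2.add (hXi.const_mul _)).add (integrable_const _)
  have hcsqd : Integrable (fun ω => (X ω ^ 2 + 2 * (l * m) * X ω + (l * m) ^ 2) / (1 + l)) ℙ :=
    hcsq.div_const _
  have hA : Integrable (fun ω => X ω ^ 2 + l * EY2) ℙ := hX2.add (integrable_const _)
  have hceq : c = fun ω => (X ω ^ 2 + l * EY2)
      - (X ω ^ 2 + 2 * (l * m) * X ω + (l * m) ^ 2) / (1 + l) := by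
    funext ω; rw [hc]; ring
  have hci : Integrable c ℙ := by
    rw [hceq]; exact hA.sub hcsqd
  -- integrability of the inf part
  have hWm : MemLp W 2 ℙ := by
    have h1 : W = fun ω => (1 + l)⁻¹ * (X ω + l * m) := by
      funext ω; rw [hW]; field_simp
    rw [h1]
    exact (hX.add (memLp_const _)).const_mul _
  have hinti : ∀ i : Fin n, Integrable (fun ω => (u i - W ω) ^ 2) ℙ :=
    fun i => ((memLp_const (u i)).sub hWm).integrable_sq
  have hInf : Integrable (fun ω => ⨅ i, (u i - W ω) ^ 2) ℙ := by
    have h1 : (fun ω => ⨅ i, (u i - W ω) ^ 2)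
        = Finset.univ.inf' Finset.univ_nonempty
            (fun i => fun ω => (u i - W ω) ^ 2) := by
      funext ω
      rw [← Finset.inf'_univ_eq_ciInf, Finset.inf'_apply]
    rw [h1]
    exact Finset.inf'_induction (p := fun g : Ω → ℝ => Integrable g ℙ) _ _
      (fun a ha b hb => ha.inf hb) (fun i _ => hinti i)
  -- compute the main integral
  have hmain : (∫ ω, ⨅ i, ((X ω - u i) ^ 2 + l * (∫ ω', (Y ω' - u i) ^ 2)))
      = (1 + l) * (∫ ω, ⨅ i, (u i - W ω) ^ 2) + ∫ ω, c ω := by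
    rw [show (fun ω => ⨅ i, ((X ω - u i) ^ 2 + l * (∫ ω', (Y ω' - u i) ^ 2)))
        = fun ω => (1 + l) * (⨅ i, (u i - W ω) ^ 2) + c ω from funext hpt]
    rw [integral_add (hInf.const_mul _) hci, integral_const_mul]
  rw [hmain]
  -- compute ∫ c
  have hXYint : (∫ ω, X ω * Y ω) = EX * m := hXY.integral_fun_mul_eq_mul_integral
    hX.aestronglyMeasurable hY.aestronglyMeasurable
  have hXYi : Integrable (fun ω => X ω * Y ω) ℙ := hXY.integrable_mul hXi hYi
  have hXmY : (∫ ω, (X ω - Y ω) ^ 2) = EX2 - 2 * (EX * m) + EY2 := by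
    have h1 : (fun ω => (X ω - Y ω) ^ 2)
        = fun ω => (X ω ^ 2 - 2 * (X ω * Y ω)) + Y ω ^ 2 := by
      funext ω; ring
    have hB : Integrable (fun ω => X ω ^ 2 - 2 * (X ω * Y ω)) ℙ :=
      hX2.sub (hXYi.const_mul _)
    rw [h1, integral_add hB hY2, integral_sub hX2 (hXYi.const_mul _),
      integral_const_mul]
    rw [hEX2, hEY2]
    have h2 : (∫ a, X a * Y a) = EX * m := hXYint
    rw [h2]
  have hcint : (∫ ω, c ω) = EX2 + l * EY2
      - (EX2 + 2 * (l * m) * EX + (l * m) ^ 2) / (1 + l) := by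
    have hD : Integrable (fun ω => X ω ^ 2 + 2 * (l * m) * X ω) ℙ :=
      hX2.add (hXi.const_mul _)
    rw [hceq]
    rw [integral_sub hA hcsqd, integral_add hX2 (integrable_const _),
      integral_div, integral_add hD (integrable_const _),
      integral_add hX2 (hXi.const_mul _), integral_const_mul, integral_const]
    simp [integral_const_mul, hEX2, hEX]
  rw [hcint, hXmY]
  rw [hEY2, hm]
  field_simp
  ring
end
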